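/- (Zero Exclusion Principle) Let T ⊆ ℝ^l be a bounded, closed, connected set and let f(s,t) = Σ_{i=0}^n c_i(t) s^i be a polynomial whose complex coefficients c_i(t) depend continuously on t ∈ T and whose leading coefficient satisfies c_n(t) ≠ 0 for all t ∈ T. Then f(·,t) is Hurwitz stable for every t ∈ T if and only if (1) there exists t* ∈ T such that f(·,t*) is Hurwitz stable, and (2) f(jω, t) ≠ 0 for every ω ∈ ℝ and every t ∈ T. -/

import Mathlib

open Polynomial

/-- A polynomial is Hurwitz stable if all its complex roots have negative real part. -/
def Hurwitz (p : ℂ[X]) : Prop :=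
  ∀ z : ℂ, p.IsRoot z → z.re < 0

/-- The polynomial `f(s,t) = ∑_{i=0}^n c_i(t) s^i`. -/
noncomputable def tPoly (l n : ℕ) (c : ℕ → (Fin l → ℝ) → ℂ) (t : Fin l → ℝ) : ℂ[X] :=
  ∑ i ∈ Finset.range (n + 1), Polynomial.C (c i t) * Polynomial.X ^ i

open Filter Topology NNReal

lemma tPoly_coeff (l n : ℕ) (c : ℕ → (Fin l → ℝ) → ℂ) (t : Fin l → ℝ) (k : ℕ) :
    (tPoly l n c t).coeff k = if k ≤ n then c k t else 0 := by
  rw [tPoly, Polynomial.finset_sum_coeff]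
  simp only [Polynomial.coeff_C_mul, Polynomial.coeff_X_pow, mul_ite, mul_one, mul_zero]
  rw [Finset.sum_ite_eq (Finset.range (n+1)) k fun i => c i t]
  simp [Nat.lt_succ_iff]

lemma tPoly_natDegree (l n : ℕ) (c : ℕ → (Fin l → ℝ) → ℂ) (t : Fin l → ℝ)
    (h : c n t ≠ 0) : (tPoly l n c t).natDegree = n := by
  apply le_antisymm
  · apply Polynomial.natDegree_le_iff_coeff_eq_zero.mpr
    intro k hk
    rw [tPoly_coeff]
    simp only [ite_eq_right_iff]
    omega
  · apply Polynomial.le_natDegree_of_ne_zero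
    rw [tPoly_coeff]
    simpa using h

lemma tPoly_leadingCoeff (l n : ℕ) (c : ℕ → (Fin l → ℝ) → ℂ) (t : Fin l → ℝ)
    (h : c n t ≠ 0) : (tPoly l n c t).leadingCoeff = c n t := by
  rw [Polynomial.leadingCoeff, tPoly_natDegree l n c t h, tPoly_coeff]
  simp

lemma tPoly_ne_zero (l n : ℕ) (c : ℕ → (Fin l → ℝ) → ℂ) (t : Fin l → ℝ)
    (h : c n t ≠ 0) : tPoly l n c t ≠ 0 := by
  intro h0
  apply h
  have := tPoly_coeff l n c t n
  rw [h0] at this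
  simpa using this.symm

lemma tPoly_eval (l n : ℕ) (c : ℕ → (Fin l → ℝ) → ℂ) (t : Fin l → ℝ) (z : ℂ) :
    (tPoly l n c t).eval z = ∑ i ∈ Finset.range (n + 1), c i t * z ^ i := by
  simp [tPoly, Polynomial.eval_finset_sum]

/-- Core quantitative lemma: if `q` evaluates to something small at `z` relative to its
leading coefficient, then `q` has a root near `z`. -/
lemma exists_root_near {q : ℂ[X]} (hq : q ≠ 0) (z : ℂ) (ε : ℝ≥0)
    (h : ‖q.eval z‖₊ < ‖q.leadingCoeff‖₊ * ε ^ q.natDegree) :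
    ∃ r : ℂ, q.IsRoot r ∧ ‖z - r‖₊ < ε := by
  by_contra hc
  push_neg at hc
  have hsplit : q.Splits := IsAlgClosed.splits q
  have hfac := hsplit.eq_prod_roots
  have hcard : q.natDegree = Multiset.card q.roots := by
    simpa using hsplit.natDegree_eq_card_roots
  have he : q.eval z = q.leadingCoeff * ((q.roots.map fun r => z - r).prod) := by
    conv_lhs => rw [hfac]
    simp [Polynomial.eval_multiset_prod, Multiset.map_map, Function.comp]
  have hnorm : ‖q.eval z‖₊ = ‖q.leadingCoeff‖₊ * ((q.roots.map fun r => ‖z - r‖₊).prod) := by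
    rw [he, nnnorm_mul]
    congr 1
    rw [show (fun r : ℂ => ‖z - r‖₊) = (nnnormHom.toMonoidHom : ℂ →* ℝ≥0) ∘ (fun r => z - r)
      from rfl, ← Multiset.map_map, ← map_multiset_prod]
    rfl
  have hb : ε ^ q.natDegree ≤ (q.roots.map fun r => ‖z - r‖₊).prod := by
    rw [hcard, ← Multiset.card_map (fun r => ‖z - r‖₊) q.roots]
    apply Multiset.pow_card_le_prod
    intro x hx
    obtain ⟨r, hr, rfl⟩ := Multiset.mem_map.mp hx
    exact hc r ((Polynomial.mem_roots hq).mp hr)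
  exact absurd h (not_lt.mpr (by rw [hnorm]; exact mul_le_mul_of_nonneg_left hb zero_le))

/-- Zero Exclusion Principle: for a bounded, closed, connected parameter set `T` and a
polynomial family `f(s,t)` of fixed degree `n` with coefficients continuous in `t`,
the whole family is Hurwitz stable iff one member is Hurwitz stable and no member
vanishes on the imaginary axis. -/
theorem zero_exclusion_principle (l n : ℕ) (T : Set (Fin l → ℝ))
    (hTb : Bornology.IsBounded T) (hTc : IsClosed T) (hTconn : IsConnected T)
    (c : ℕ → (Fin l → ℝ) → ℂ)
    (hcont : ∀ i, ContinuousOn (c i) T)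
    (hlead : ∀ t ∈ T, c n t ≠ 0) :
    (∀ t ∈ T, Hurwitz (tPoly l n c t)) ↔
      ((∃ t0 ∈ T, Hurwitz (tPoly l n c t0)) ∧
        ∀ ω : ℝ, ∀ t ∈ T, Polynomial.eval ((ω : ℂ) * Complex.I) (tPoly l n c t) ≠ 0) := by
  constructor
  · intro h
    constructor
    · obtain ⟨t0, ht0⟩ := hTconn.nonempty
      exact ⟨t0, ht0, h t0 ht0⟩
    · intro ω t ht h0
      have := h t ht ((ω : ℂ) * Complex.I) h0
      simp [Complex.mul_I_re] at this
  · rintro ⟨⟨t0, ht0T, ht0H⟩, him⟩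
    -- continuity of coefficients along sequences in `T`
    have key : ∀ (u : ℕ → (Fin l → ℝ)) (t : Fin l → ℝ), (∀ k, u k ∈ T) → t ∈ T →
        Tendsto u atTop (𝓝 t) → ∀ i, Tendsto (fun k => c i (u k)) atTop (𝓝 (c i t)) := by
      intro u t hu ht hlim i
      exact (hcont i t ht).tendsto.comp
        (tendsto_nhdsWithin_of_tendsto_nhds_of_eventually_within u hlim
          (Eventually.of_forall hu))
    -- continuity of the evaluation map along sequences
    have keval : ∀ (u : ℕ → (Fin l → ℝ)) (t : Fin l → ℝ), (∀ k, u k ∈ T) → t ∈ T →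
        Tendsto u atTop (𝓝 t) → ∀ (v : ℕ → ℂ) (a : ℂ), Tendsto v atTop (𝓝 a) →
        Tendsto (fun k => (tPoly l n c (u k)).eval (v k)) atTop
          (𝓝 ((tPoly l n c t).eval a)) := by
      intro u t hu ht hlim v a hv
      simp only [tPoly_eval]
      exact tendsto_finset_sum _ fun i _ => (key u t hu ht hlim i).mul (hv.pow i)
    -- a point on the imaginary axis is never a root
    have haxis : ∀ t ∈ T, ∀ z : ℂ, (tPoly l n c t).IsRoot z → z.re ≠ 0 := by
      intro t ht z hz h0
      apply him z.im t ht
      have hzz : (z.im : ℂ) * Complex.I = z := by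
        apply Complex.ext <;> simp [Complex.mul_I_re, Complex.mul_I_im, h0]
      rw [hzz]
      exact hz
    set S : Set (Fin l → ℝ) := {t | t ∈ T ∧ Hurwitz (tPoly l n c t)} with hSdef
    set K : Set (Fin l → ℝ) := {t | t ∈ T ∧ ¬ Hurwitz (tPoly l n c t)} with hKdef
    -- S is closed
    have hScl : IsClosed S := by
      apply IsSeqClosed.isClosed
      intro u t hu hlim
      have huT : ∀ k, u k ∈ T := fun k => (hu k).1
      have htT : t ∈ T := hTc.isSeqClosed huT hlim
      refine ⟨htT, fun z hz => ?_⟩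
      by_contra hzre
      push_neg at hzre
      have hzre' : 0 < z.re := hzre.lt_of_ne (Ne.symm (haxis t htT z hz))
      set ε : ℝ≥0 := z.re.toNNReal with hεdef
      have hε : 0 < ε := Real.toNNReal_pos.mpr hzre'
      have h1 : Tendsto (fun k => ‖(tPoly l n c (u k)).eval z‖₊) atTop (𝓝 0) := by
        have h2 := (keval u t huT htT hlim (fun _ => z) z tendsto_const_nhds).nnnorm
        rw [hz] at h2
        simpa using h2
      have h2 : Tendsto (fun k => ‖c n (u k)‖₊ * ε ^ n) atTop (𝓝 (‖c n t‖₊ * ε ^ n)) :=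
        (key u t huT htT hlim n).nnnorm.mul_const _
      have hpos : (0 : ℝ≥0) < ‖c n t‖₊ * ε ^ n :=
        mul_pos (nnnorm_pos.mpr (hlead t htT)) (pow_pos hε n)
      obtain ⟨k, hk⟩ := (h1.eventually_lt h2 hpos).exists
      obtain ⟨r, hr, hrnear⟩ := exists_root_near (tPoly_ne_zero l n c (u k) (hlead _ (huT k))) z ε
        (by rwa [tPoly_leadingCoeff l n c (u k) (hlead _ (huT k)),
          tPoly_natDegree l n c (u k) (hlead _ (huT k))])
      have hH : r.re < 0 := (hu k).2 r hr
      have hd1 : z.re - r.re ≤ ‖z - r‖ := by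
        have h3 := Complex.abs_re_le_norm (z - r)
        rw [Complex.sub_re] at h3
        exact (le_abs_self _).trans h3
      have hd2 : ‖z - r‖ < z.re := by
        have := (NNReal.coe_lt_coe).mpr hrnear
        rwa [coe_nnnorm, hεdef, Real.coe_toNNReal _ hzre'.le] at this
      linarith
    -- K is closed
    have hKcl : IsClosed K := by
      apply IsSeqClosed.isClosed
      intro u t hu hlim
      have huT : ∀ k, u k ∈ T := fun k => (hu k).1
      have htT : t ∈ T := hTc.isSeqClosed huT hlim
      refine ⟨htT, fun hH => ?_⟩
      have hex : ∀ k, ∃ z : ℂ, (tPoly l n c (u k)).IsRoot z ∧ 0 ≤ z.re := by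
        intro k
        have h2 := (hu k).2
        unfold Hurwitz at h2
        push_neg at h2
        exact h2
      choose zs hroot hre using hex
      have hcn : Tendsto (fun k => ‖c n (u k)‖₊) atTop (𝓝 ‖c n t‖₊) :=
        (key u t huT htT hlim n).nnnorm
      set δ : ℝ≥0 := ‖c n t‖₊ / 2 with hδdef
      have hcnt : (0 : ℝ≥0) < ‖c n t‖₊ := nnnorm_pos.mpr (hlead t htT)
      have hδ : 0 < δ := by
        rw [hδdef]
        exact div_pos hcnt two_pos
      have hNδ : ∀ᶠ k in atTop, δ < ‖c n (u k)‖₊ :=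
        hcn.eventually (eventually_gt_nhds (NNReal.half_lt_self hcnt.ne'))
      obtain ⟨N, hN⟩ := eventually_atTop.mp hNδ
      have hCb : ∀ i, ∃ Ci : ℝ≥0, ∀ k, ‖c i (u k)‖₊ ≤ Ci := by
        intro i
        obtain ⟨Ci, hCi⟩ := (key u t huT htT hlim i).nnnorm.bddAbove_range
        exact ⟨Ci, fun k => hCi (Set.mem_range_self k)⟩
      choose Cb hCbs using hCb
      set C : ℝ≥0 := ∑ i ∈ Finset.range (n + 1), Cb i with hCdef
      have hCle : ∀ i ∈ Finset.range (n + 1), ∀ k, ‖c i (u k)‖₊ ≤ C := fun i hi k =>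
        (hCbs i k).trans (Finset.single_le_sum (f := Cb) (fun _ _ => zero_le) hi)
      set M : ℝ≥0 := C / δ + 1 with hMdef
      have hzb : ∀ k, N ≤ k → ‖zs k‖₊ ≤ M := by
        intro k hk
        have h1 : ‖zs k‖₊ < Polynomial.cauchyBound (tPoly l n c (u k)) :=
          (hroot k).norm_lt_cauchyBound (tPoly_ne_zero l n c (u k) (hlead _ (huT k)))
        refine le_of_lt (lt_of_lt_of_le h1 ?_)
        rw [Polynomial.cauchyBound, tPoly_natDegree l n c (u k) (hlead _ (huT k)),
          tPoly_leadingCoeff l n c (u k) (hlead _ (huT k)), hMdef]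
        refine add_le_add ?_ le_rfl
        apply div_le_div₀ (zero_le : 0 ≤ C) ?_ hδ (hN k hk).le
        apply Finset.sup_le
        intro i hi
        have hin : i ≤ n := (Finset.mem_range.mp hi).le
        rw [tPoly_coeff, if_pos hin]
        exact hCle i (Finset.mem_range.mpr (Nat.lt_succ_of_le hin)) k
      have hmemball : ∀ k, zs (k + N) ∈ Metric.closedBall (0 : ℂ) M := by
        intro k
        rw [Metric.mem_closedBall, dist_zero_right, ← coe_nnnorm]
        exact_mod_cast hzb (k + N) (Nat.le_add_left N k)
      obtain ⟨a, -, φ, hφ, ha⟩ := tendsto_subseq_of_bounded Metric.isBounded_closedBall hmemball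
      have hsub : Tendsto (fun k => u (φ k + N)) atTop (𝓝 t) :=
        hlim.comp ((tendsto_add_atTop_nat N).comp hφ.tendsto_atTop)
      have h0 : (tPoly l n c t).eval a = 0 := by
        have hev := keval (fun k => u (φ k + N)) t (fun k => huT _) htT hsub
          (fun k => zs (φ k + N)) a ha
        have hconst : (fun k => (tPoly l n c (u (φ k + N))).eval (zs (φ k + N)))
            = fun _ => (0 : ℂ) := funext fun k => hroot _
        rw [hconst] at hev
        exact tendsto_nhds_unique hev tendsto_const_nhds
      have hare : 0 ≤ a.re := by
        have hre' : Tendsto (fun k => (zs (φ k + N)).re) atTop (𝓝 a.re) :=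
          (Complex.continuous_re.tendsto a).comp ha
        exact ge_of_tendsto hre' (Eventually.of_forall fun k => hre _)
      exact absurd (hH a h0) (not_lt.mpr hare)
    -- connectivity finish
    intro t1 ht1
    by_contra hH1
    have hcover : T ⊆ S ∪ K := by
      intro x hx
      by_cases h : Hurwitz (tPoly l n c x)
      · exact Or.inl ⟨hx, h⟩
      · exact Or.inr ⟨hx, h⟩
    obtain ⟨x, -, hxS, hxK⟩ := isPreconnected_closed_iff.mp hTconn.isPreconnected S K hScl hKcl
      hcover ⟨t0, ht0T, ht0T, ht0H⟩ ⟨t1, ht1, ht1, hH1⟩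
    exact hxK.2 hxS.2
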